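/- Let A ∈ F^{2n×2n} be a lower-triangular totally-non-singular matrix over a field F. For x ∈ F^k (k ≤ n), let x' ∈ F^{2k} be obtained by replacing each symbol x_i by the pair (x_i, 0). Then for every nonzero x ∈ F^k with ℓ = split(0^k, x), the vector y' = A^{(2k)}x' ∈ F^{2k} has Hamming weight over F strictly greater than k − ℓ = (2k − 2ℓ)/2; hence the n-truncated tree code x ↦ A^{(2k)}x', viewed as a map F^(≤n) → (F^2)^(≤n), has distance greater than 1/2. -/

import Mathlib

/-- A lower-triangular matrix is *totally non-singular* if every square submatrix
`A[I|J]` with row indices `I = {i₁ < ⋯ < i_r}` and column indices `J = {j₁ < ⋯ < j_r}`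
satisfying `i_s ≥ j_s` for all `s` is non-singular. -/
def TotallyNonSingular {F : Type*} [Field F] {n : ℕ} (A : Matrix (Fin n) (Fin n) F) : Prop :=
  ∀ (r : ℕ) (I J : Fin r → Fin n), StrictMono I → StrictMono J →
    (∀ s : Fin r, J s ≤ I s) → (A.submatrix I J).det ≠ 0

/-- `x' ∈ F^{2k}` obtained from `x ∈ F^k` by replacing each symbol `x_i` by the pair `(x_i, 0)`. -/
def doubled {F : Type*} [Zero F] {k : ℕ} (x : Fin k → F) : Fin (2 * k) → F :=
  fun p => if p.val % 2 = 0 then x ⟨p.val / 2, by omega⟩ else 0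

set_option maxRecDepth 10000 in
lemma card_band {k a b : ℕ} (hb : b ≤ 2 * k) :
    (Finset.univ.filter fun p : Fin (2 * k) => a ≤ p.val ∧ p.val < b).card = b - a := by
  rw [← Nat.card_Ico a b]
  apply Finset.card_nbij (i := fun p => p.val)
  · intro p hp
    simp only [Finset.coe_filter, Finset.mem_coe, Finset.mem_filter, Finset.mem_univ, true_and, Set.mem_setOf_eq] at hp
    simp only [Finset.mem_coe, Finset.coe_Ico, Set.mem_Ico, Finset.mem_Ico]
    omega
  · intro p _ q _ h
    exact Fin.ext h
  · intro c hc
    simp only [Finset.coe_Ico, Set.mem_Ico] at hc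
    refine ⟨⟨c, by omega⟩, ?_, rfl⟩
    simp only [Finset.mem_coe, Finset.mem_filter, Finset.mem_univ, true_and]
    exact hc

lemma key {F : Type*} [Field F] [DecidableEq F] {n : ℕ}
    (A : Matrix (Fin (2 * n)) (Fin (2 * n)) F)
    (hlow : ∀ i j : Fin (2 * n), i < j → A i j = 0)
    (htns : TotallyNonSingular A)
    {k : ℕ} (hk : k ≤ n) (x : Fin k → F) (ℓ : ℕ) (hℓ : ℓ < k)
    (hx0 : ∀ i : Fin k, i.val < ℓ → x i = 0) (hxℓ : x ⟨ℓ, hℓ⟩ ≠ 0)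
    (h2 : 2 * k ≤ 2 * n)
    (y : Fin (2 * k) → F)
    (hy : y = (A.submatrix (Fin.castLE h2) (Fin.castLE h2)).mulVec (doubled x)) :
    ∀ m, ℓ < m → m ≤ k →
      m - ℓ + 1 ≤ (Finset.univ.filter fun p : Fin (2 * k) =>
        p.val < 2 * m ∧ y p ≠ 0).card := by
  have hyval : ∀ p : Fin (2 * k),
      y p = ∑ j : Fin (2 * k), A (Fin.castLE h2 p) (Fin.castLE h2 j) * doubled x j := by
    intro p
    rw [hy]
    simp [Matrix.mulVec, dotProduct, Matrix.submatrix]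
  -- y vanishes below 2ℓ
  have hzero : ∀ p : Fin (2 * k), p.val < 2 * ℓ → y p = 0 := by
    intro p hp
    rw [hyval]
    apply Finset.sum_eq_zero
    intro j _
    rcases lt_or_ge p.val j.val with h | h
    · rw [hlow _ _ (by rw [Fin.lt_def]; exact h), zero_mul]
    · have : doubled x j = 0 := by
        unfold doubled
        rcases Nat.even_or_odd j.val with he | ho
        · rw [if_pos (Nat.even_iff.mp he)]
          exact hx0 ⟨j.val / 2, by omega⟩ (by show j.val / 2 < ℓ; omega)
        · rw [if_neg (by have := Nat.odd_iff.mp ho; omega)]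
      rw [this, mul_zero]
  intro m
  induction m using Nat.strong_induction_on with
  | _ m IH =>
    intro hℓm hmk
    by_contra hcon
    push_neg at hcon
    set r := m - ℓ with hr
    have hrpos : 0 < r := by omega
    -- the band [2ℓ, 2m) and the zero set there
    set T : Finset (Fin (2 * k)) :=
      Finset.univ.filter (fun p => 2 * ℓ ≤ p.val ∧ p.val < 2 * m) with hT
    set Z : Finset (Fin (2 * k)) := T.filter (fun p => y p = 0) with hZdef
    have hN : (Finset.univ.filter fun p : Fin (2 * k) => p.val < 2 * m ∧ y p ≠ 0)
        = T.filter (fun p => ¬ (y p = 0)) := by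
      ext p
      simp only [Finset.mem_filter, Finset.mem_univ, true_and, hT]
      constructor
      · rintro ⟨h1, h2'⟩
        refine ⟨⟨?_, h1⟩, h2'⟩
        by_contra hlt
        exact h2' (hzero p (by omega))
      · rintro ⟨⟨_, h1⟩, h2'⟩
        exact ⟨h1, h2'⟩
    have hTcard : T.card = 2 * m - 2 * ℓ := card_band (by omega)
    have hsplitcard := Finset.card_filter_add_card_filter_not
      (s := T) (p := fun p => y p = 0)
    rw [hN] at hcon
    have hZeq : (T.filter (fun p => y p = 0)).card = Z.card := rfl
    have hZcard : r ≤ Z.card := by omega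
    obtain ⟨I0, hImem⟩ : ∃ I0 : Fin r ↪o Fin (2 * k), ∀ s : Fin r, I0 s ∈ Z :=
      ⟨Z.orderEmbOfCardLe hZcard, fun s => Z.orderEmbOfCardLe_mem hZcard s⟩
    have hImem' : ∀ s : Fin r, 2 * ℓ ≤ (I0 s).val ∧ (I0 s).val < 2 * m ∧ y (I0 s) = 0 := by
      intro s
      have := hImem s
      simp only [hZdef, hT, Finset.mem_filter, Finset.mem_univ, true_and] at this
      tauto
    have hIlb : ∀ t : ℕ, ∀ ht : t < r, 2 * ℓ + t ≤ (I0 ⟨t, ht⟩ : Fin (2 * k)).val := by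
      intro t
      induction t with
      | zero => intro ht; exact (hImem' ⟨0, ht⟩).1
      | succ t ih =>
        intro ht
        have ht' : t < r := by omega
        have h1 := ih ht'
        have h2' : (I0 ⟨t, ht'⟩ : Fin (2 * k)) < I0 ⟨t + 1, ht⟩ :=
          I0.strictMono (by simp [Fin.lt_def])
        have := Fin.lt_def.mp h2'
        omega
    by_cases hcase : ∀ s : Fin r, 2 * ℓ + 2 * s.val ≤ (I0 s).val
    · -- Case 1: the non-singular submatrix kills x at ℓ
      set J : Fin r → Fin (2 * k) :=
        fun s => ⟨2 * ℓ + 2 * s.val, by have := s.isLt; omega⟩ with hJ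
      have hJmono : StrictMono J := by
        intro a b hab
        simp only [hJ, Fin.lt_def]
        have := Fin.lt_def.mp hab
        omega
      set I' : Fin r → Fin (2 * n) := fun s => Fin.castLE h2 (I0 s) with hI'
      set J' : Fin r → Fin (2 * n) := fun s => Fin.castLE h2 (J s) with hJ'
      have hI'mono : StrictMono I' := by
        intro a b hab
        simp only [hI', Fin.lt_def, Fin.coe_castLE]
        exact Fin.lt_def.mp (I0.strictMono hab)
      have hJ'mono : StrictMono J' := by
        intro a b hab
        simp only [hJ', Fin.lt_def, Fin.coe_castLE]
        exact Fin.lt_def.mp (hJmono hab)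
      have hJI : ∀ s : Fin r, J' s ≤ I' s := by
        intro s
        simp only [hI', hJ', Fin.le_def, Fin.coe_castLE, hJ]
        exact hcase s
      have hdet := htns r I' J' hI'mono hJ'mono hJI
      set v : Fin r → F := fun t => x ⟨ℓ + t.val, by have := t.isLt; omega⟩ with hv
      have hmv : (A.submatrix I' J').mulVec v = 0 := by
        funext s
        have hys : y (I0 s) = 0 := (hImem' s).2.2
        have hterm : ∀ j : Fin (2 * k), j ∉ Finset.univ.image J →
            A (Fin.castLE h2 (I0 s)) (Fin.castLE h2 j) * doubled x j = 0 := by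
          intro j hj
          rcases Nat.even_or_odd j.val with he | ho
          · have hje := Nat.even_iff.mp he
            rcases lt_or_ge j.val (2 * ℓ) with h1 | h1
            · have : doubled x j = 0 := by
                unfold doubled
                rw [if_pos hje]
                exact hx0 ⟨j.val / 2, by have := j.isLt; omega⟩ (by show j.val / 2 < ℓ; omega)
              rw [this, mul_zero]
            · rcases lt_or_ge j.val (2 * m) with h2' | h2'
              · exfalso
                apply hj
                refine Finset.mem_image.mpr ⟨⟨(j.val - 2 * ℓ) / 2, by omega⟩, Finset.mem_univ _, ?_⟩
                simp only [hJ]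
                exact Fin.ext (by simp; omega)
              · have hlt : (I0 s).val < j.val := by
                  have := (hImem' s).2.1
                  omega
                rw [hlow _ _ (by rw [Fin.lt_def]; exact hlt), zero_mul]
          · have : doubled x j = 0 := by
              unfold doubled
              rw [if_neg (by have := Nat.odd_iff.mp ho; omega)]
            rw [this, mul_zero]
        have hsum : y (I0 s) = ∑ t : Fin r,
            A (Fin.castLE h2 (I0 s)) (Fin.castLE h2 (J t)) * doubled x (J t) := by
          rw [hyval]
          rw [← Finset.sum_subset (Finset.subset_univ (Finset.univ.image J))
            (fun j _ hj => hterm j hj)]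
          rw [Finset.sum_image (fun a _ b _ hab => hJmono.injective hab)]
        have hdx : ∀ t : Fin r, doubled x (J t) = v t := by
          intro t
          unfold doubled
          simp only [hJ, hv]
          rw [if_pos (by omega)]
          congr 1
          exact Fin.ext (by simp; omega)
        simp only [Matrix.mulVec, dotProduct, Matrix.submatrix_apply, Pi.zero_apply]
        rw [← hys, hsum]
        exact Finset.sum_congr rfl (fun t _ => by rw [hdx t])
      have hv0 : v = 0 := Matrix.eq_zero_of_mulVec_eq_zero hdet hmv
      apply hxℓ
      have := congrFun hv0 ⟨0, hrpos⟩
      simpa [hv] using this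
    · -- Case 2: apply IH to a shorter prefix
      push_neg at hcase
      obtain ⟨s₀, hs₀⟩ := hcase
      have hs0pos : 1 ≤ s₀.val := by
        have := hIlb s₀.val s₀.isLt
        simp only [Fin.eta] at this
        omega
      set m' := ℓ + s₀.val with hm'
      have hm'lt : m' < m := by have := s₀.isLt; omega
      have hIH := IH m' hm'lt (by omega) (by omega)
      -- but nonzeros below 2m' is at most s₀ - 1
      set T' : Finset (Fin (2 * k)) :=
        Finset.univ.filter (fun p => 2 * ℓ ≤ p.val ∧ p.val < 2 * m') with hT'
      have hN' : (Finset.univ.filter fun p : Fin (2 * k) => p.val < 2 * m' ∧ y p ≠ 0)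
          = T'.filter (fun p => ¬ (y p = 0)) := by
        ext p
        simp only [Finset.mem_filter, Finset.mem_univ, true_and, hT']
        constructor
        · rintro ⟨h1, h2'⟩
          refine ⟨⟨?_, h1⟩, h2'⟩
          by_contra hlt
          exact h2' (hzero p (by omega))
        · rintro ⟨⟨_, h1⟩, h2'⟩
          exact ⟨h1, h2'⟩
      have hT'card : T'.card = 2 * m' - 2 * ℓ := card_band (by omega)
      have hsplit' := Finset.card_filter_add_card_filter_not
        (s := T') (p := fun p => y p = 0)
      -- Z' contains the first s₀+1 values of I0
      have hZ'big : s₀.val + 1 ≤ (T'.filter (fun p => y p = 0)).card := by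
        have hmapsto : ∀ t : Fin (s₀.val + 1),
            I0 ⟨t.val, by have := s₀.isLt; omega⟩ ∈ T'.filter (fun p => y p = 0) := by
          intro t
          have hmem := hImem' ⟨t.val, by have := s₀.isLt; omega⟩
          have hle : (I0 ⟨t.val, by have := s₀.isLt; omega⟩ : Fin (2 * k)).val ≤ (I0 s₀).val := by
            rcases eq_or_lt_of_le (show t.val ≤ s₀.val by have := t.isLt; omega) with h | h
            · have : (⟨t.val, by have := s₀.isLt; omega⟩ : Fin r) = s₀ := Fin.ext h
              rw [this]
            · exact le_of_lt (Fin.lt_def.mp (I0.strictMono (by simpa [Fin.lt_def] using h)))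
          simp only [hT', Finset.mem_filter, Finset.mem_univ, true_and]
          exact ⟨⟨hmem.1, by omega⟩, hmem.2.2⟩
        calc s₀.val + 1 = (Finset.univ : Finset (Fin (s₀.val + 1))).card := by simp
        _ ≤ (T'.filter (fun p => y p = 0)).card := by
            apply Finset.card_le_card_of_injOn
              (fun t => I0 ⟨t.val, by have := s₀.isLt; omega⟩)
              (fun t _ => hmapsto t)
            intro a _ b _ hab
            have := I0.injective hab
            exact Fin.ext (by simpa [Fin.ext_iff] using this)
      rw [hN'] at hIH
      omega

/-- The alternate MDS construction: for a lower-triangular totally non-singular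
`A ∈ F^{2n×2n}`, and `k ≤ n`:
(a) for every nonzero `x ∈ F^k` with split `ℓ`, the vector `y' = A^{(2k)}x'` has
Hamming weight over `F` strictly greater than `k − ℓ`;
(b) hence the tree code `x ↦ A^{(2k)}x'`, viewed as mapping to `(F²)^k` (pairing
consecutive coordinates), has distance `> 1/2`. -/
theorem alternate_mds_tree_code_distance_half {F : Type*} [Field F] [DecidableEq F] {n : ℕ}
    (A : Matrix (Fin (2 * n)) (Fin (2 * n)) F)
    (hlow : ∀ i j : Fin (2 * n), i < j → A i j = 0)
    (htns : TotallyNonSingular A)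
    (k : ℕ) (hk : k ≤ n) :
    (∀ (x : Fin k → F) (ℓ : ℕ) (hℓ : ℓ < k),
      (∀ i : Fin k, i.val < ℓ → x i = 0) → x ⟨ℓ, hℓ⟩ ≠ 0 →
      ((k : ℝ) - ℓ) <
        ((Finset.univ.filter fun p : Fin (2 * k) =>
          (A.submatrix (Fin.castLE (by omega)) (Fin.castLE (by omega))).mulVec (doubled x) p ≠ 0).card : ℝ))
    ∧
    (∀ (x x' : Fin k → F) (ℓ : ℕ) (hℓ : ℓ < k),
      (∀ i : Fin k, i.val < ℓ → x i = x' i) → x ⟨ℓ, hℓ⟩ ≠ x' ⟨ℓ, hℓ⟩ →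
      (1 / 2 : ℝ) * ((k : ℝ) - ℓ) <
        hammingDist
          (fun i : Fin k =>
            ((A.submatrix (Fin.castLE (by omega)) (Fin.castLE (by omega))).mulVec (doubled x)
                (⟨2 * i.val, by omega⟩ : Fin (2 * k)),
             (A.submatrix (Fin.castLE (by omega)) (Fin.castLE (by omega))).mulVec (doubled x)
                (⟨2 * i.val + 1, by omega⟩ : Fin (2 * k))))
          (fun i : Fin k =>
            ((A.submatrix (Fin.castLE (by omega)) (Fin.castLE (by omega))).mulVec (doubled x')
                (⟨2 * i.val, by omega⟩ : Fin (2 * k)),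
             (A.submatrix (Fin.castLE (by omega)) (Fin.castLE (by omega))).mulVec (doubled x')
                (⟨2 * i.val + 1, by omega⟩ : Fin (2 * k))))) := by
  have h2 : 2 * k ≤ 2 * n := by omega
  -- nat version of part (a)
  have keyA : ∀ (x : Fin k → F) (ℓ : ℕ) (hℓ : ℓ < k),
      (∀ i : Fin k, i.val < ℓ → x i = 0) → x ⟨ℓ, hℓ⟩ ≠ 0 →
      k - ℓ + 1 ≤ (Finset.univ.filter fun p : Fin (2 * k) =>
        (A.submatrix (Fin.castLE h2) (Fin.castLE h2)).mulVec (doubled x) p ≠ 0).card := by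
    intro x ℓ hℓ hx0 hxℓ
    have hkey := key A hlow htns hk x ℓ hℓ hx0 hxℓ h2 _ rfl k hℓ le_rfl
    calc k - ℓ + 1 ≤ (Finset.univ.filter fun p : Fin (2 * k) =>
        p.val < 2 * k ∧ (A.submatrix (Fin.castLE h2) (Fin.castLE h2)).mulVec (doubled x) p ≠ 0).card := hkey
      _ ≤ _ := Finset.card_le_card (by
          intro p hp
          simp only [Finset.mem_filter, Finset.mem_univ, true_and] at hp ⊢
          exact hp.2)
  constructor
  · intro x ℓ hℓ hx0 hxℓ
    have := keyA x ℓ hℓ hx0 hxℓ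
    have hcast : (((Finset.univ.filter fun p : Fin (2 * k) =>
        (A.submatrix (Fin.castLE h2) (Fin.castLE h2)).mulVec (doubled x) p ≠ 0).card : ℝ))
        ≥ (k : ℝ) - ℓ + 1 := by
      have h1 : ((k - ℓ + 1 : ℕ) : ℝ) = (k : ℝ) - ℓ + 1 := by
        push_cast [Nat.cast_sub hℓ.le]
        ring
      rw [← h1]
      exact_mod_cast this
    linarith
  · intro x x' ℓ hℓ hagree hdiff
    set B := A.submatrix (Fin.castLE h2) (Fin.castLE h2) with hB
    set d : Fin k → F := x - x' with hd
    have hd0 : ∀ i : Fin k, i.val < ℓ → d i = 0 := by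
      intro i hi
      simp [hd, sub_eq_zero, hagree i hi]
    have hdℓ : d ⟨ℓ, hℓ⟩ ≠ 0 := sub_ne_zero.mpr hdiff
    have hdoubsub : doubled d = doubled x - doubled x' := by
      funext p
      unfold doubled
      by_cases hp : p.val % 2 = 0 <;> simp [hp, hd]
    set z := B.mulVec (doubled d) with hz
    have hzsub : z = B.mulVec (doubled x) - B.mulVec (doubled x') := by
      rw [hz, hdoubsub, Matrix.mulVec_sub]
    have hzc := keyA d ℓ hℓ hd0 hdℓ
    -- two-to-one counting
    set S : Finset (Fin (2 * k)) := Finset.univ.filter (fun p => z p ≠ 0) with hS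
    set f : Fin k → F × F := fun i =>
      (B.mulVec (doubled x) (⟨2 * i.val, by omega⟩ : Fin (2 * k)),
       B.mulVec (doubled x) (⟨2 * i.val + 1, by omega⟩ : Fin (2 * k))) with hf
    set g : Fin k → F × F := fun i =>
      (B.mulVec (doubled x') (⟨2 * i.val, by omega⟩ : Fin (2 * k)),
       B.mulVec (doubled x') (⟨2 * i.val + 1, by omega⟩ : Fin (2 * k))) with hg
    set Tt : Finset (Fin k) := Finset.univ.filter (fun i => f i ≠ g i) with hTt
    have hzp : ∀ q : Fin (2 * k),
        z q = B.mulVec (doubled x) q - B.mulVec (doubled x') q := by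
      intro q; rw [hzsub]; rfl
    have hcard2 : S.card ≤ 2 * Tt.card := by
      apply Finset.card_le_mul_card_image_of_maps_to
        (f := fun p : Fin (2 * k) => (⟨p.val / 2, by have := p.isLt; omega⟩ : Fin k))
      · intro p hp
        simp only [hS, Finset.mem_filter, Finset.mem_univ, true_and] at hp
        simp only [hTt, Finset.mem_filter, Finset.mem_univ, true_and]
        intro hfg
        apply hp
        have h1 := congrArg Prod.fst hfg
        have h2' := congrArg Prod.snd hfg
        simp only [hf, hg] at h1 h2'
        rcases Nat.even_or_odd p.val with he | ho
        · have hz0 := sub_eq_zero_of_eq h1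
          rw [← hzp] at hz0
          have hp1 : (⟨2 * ((⟨p.val / 2, by have := p.isLt; omega⟩ : Fin k) : Fin k).val,
              by have := p.isLt; omega⟩ : Fin (2 * k)) = p :=
            Fin.ext (show 2 * (p.val / 2) = p.val by have := Nat.even_iff.mp he; omega)
          rwa [hp1] at hz0
        · have hz0 := sub_eq_zero_of_eq h2'
          rw [← hzp] at hz0
          have hp1 : (⟨2 * ((⟨p.val / 2, by have := p.isLt; omega⟩ : Fin k) : Fin k).val + 1,
              by have := p.isLt; omega⟩ : Fin (2 * k)) = p :=
            Fin.ext (show 2 * (p.val / 2) + 1 = p.val by have := Nat.odd_iff.mp ho; omega)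
          rwa [hp1] at hz0
      · intro b _
        have hsub : (S.filter fun p : Fin (2 * k) =>
            (⟨p.val / 2, by have := p.isLt; omega⟩ : Fin k) = b)
            ⊆ {(⟨2 * b.val, by have := b.isLt; omega⟩ : Fin (2 * k)),
               (⟨2 * b.val + 1, by have := b.isLt; omega⟩ : Fin (2 * k))} := by
          intro p hp
          simp only [Finset.mem_filter] at hp
          have hval : p.val / 2 = b.val := congrArg Fin.val hp.2
          simp only [Finset.mem_insert, Finset.mem_singleton, Fin.ext_iff]
          show p.val = 2 * b.val ∨ p.val = 2 * b.val + 1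
          have := p.isLt
          omega
        exact le_trans (Finset.card_le_card hsub)
          ((Finset.card_insert_le _ _).trans (by simp))
    have hhd : hammingDist f g = Tt.card := rfl
    have hfinal : k - ℓ + 1 ≤ 2 * Tt.card := le_trans hzc hcard2
    have hcast : ((k - ℓ + 1 : ℕ) : ℝ) = (k : ℝ) - ℓ + 1 := by
      push_cast [Nat.cast_sub hℓ.le]; ring
    have : (k : ℝ) - ℓ + 1 ≤ 2 * Tt.card := by
      rw [← hcast]; exact_mod_cast hfinal
    rw [hhd]
    linarith
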